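/- arXiv:1806.03596 — 2 statements merged into one kernel-verified Lean document; each statement's English description precedes it below -/
import Mathlib

section
/- (W_j, Λ_j) is a gf-orthonormal basis for H with respect to {v_j} if and only if the induced sequence {u_{j,k} : j ∈ J, k ∈ K_j} is an orthonormal basis of H. -/
open scoped InnerProductSpace
open ContinuousLinearMap

/-- The orthogonal projection of `H` onto the closed subspace `W j`, as a map `H →L[ℂ] H`. -/
noncomputable def gfProj {H : Type*} [NormedAddCommGroup H] [InnerProductSpace ℂ H]
    {J : Type*} (W : J → Submodule ℂ H) [∀ j, CompleteSpace (W j)] (j : J) : H →L[ℂ] H :=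
  (W j).subtypeL.comp (W j).orthogonalProjectionOnto

lemma gfProj_inner_swap {H : Type*} [NormedAddCommGroup H] [InnerProductSpace ℂ H]
    {J : Type*} (W : J → Submodule ℂ H) [∀ j, CompleteSpace (W j)] (j : J) (x y : H) :
    ⟪gfProj W j x, y⟫_ℂ = ⟪x, gfProj W j y⟫_ℂ :=
  Submodule.inner_starProjection_left_eq_right (W j) x y

lemma gf_real_smul_eq {H : Type*} [NormedAddCommGroup H] [InnerProductSpace ℂ H]
    (r : ℝ) (x : H) : r • x = (r : ℂ) • x := by
  rw [← algebraMap_smul ℂ r x]; rfl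

/-- parseval-type statement for a Hilbert basis, real form -/
lemma gf_hasSum_norm_sq_inner {E : Type*} [NormedAddCommGroup E] [InnerProductSpace ℂ E]
    {ι : Type*} (b : HilbertBasis ι ℂ E) (x : E) :
    HasSum (fun i => ‖⟪b i, x⟫_ℂ‖ ^ 2) (‖x‖ ^ 2) := by
  have h := (b.hasSum_inner_mul_inner x x).mapL Complex.reCLM
  have h1 : ∀ i, Complex.reCLM (⟪x, b i⟫_ℂ * ⟪b i, x⟫_ℂ) = ‖⟪b i, x⟫_ℂ‖ ^ 2 := by
    intro i
    rw [← inner_conj_symm (b i) x, RCLike.mul_conj]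
    simp only [Complex.reCLM_apply, ← Complex.ofReal_pow, Complex.ofReal_re, RCLike.norm_conj]
    rw [norm_inner_symm]
    norm_cast
  have h2 : Complex.reCLM ⟪x, x⟫_ℂ = ‖x‖ ^ 2 := by
    simpa using inner_self_eq_norm_sq (𝕜 := ℂ) x
  simp only [h1, h2] at h; exact h

/-- `(W_j, Λ_j)` is a gf-orthonormal basis for `H` w.r.t. `{v_j}` iff the
induced sequence `{u_{j,k}}` is an orthonormal basis of `H` (an orthonormal family whose
closed linear span is `H`). -/
theorem gf_orthonormal_basis_iff_induced_orthonormal_basis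
    {H : Type*} [NormedAddCommGroup H] [InnerProductSpace ℂ H] [CompleteSpace H]
    {J : Type*} [Countable J]
    {Hs : J → Type*} [∀ j, NormedAddCommGroup (Hs j)] [∀ j, InnerProductSpace ℂ (Hs j)]
    [∀ j, CompleteSpace (Hs j)]
    (W : J → Submodule ℂ H) [∀ j, CompleteSpace (W j)]
    (v : J → ℝ) (hv : ∀ j, 0 < v j)
    (Λ : ∀ j, H →L[ℂ] Hs j)
    (K : J → Type*) [∀ j, Countable (K j)]
    (e : ∀ j, HilbertBasis (K j) ℂ (Hs j))
    (u : ∀ j, K j → H)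
    (hu : ∀ j k, u j k = v j • gfProj W j (adjoint (Λ j) (e j k))) :
    ((∀ j (g g' : Hs j),
        ⟪v j • gfProj W j (adjoint (Λ j) g), v j • gfProj W j (adjoint (Λ j) g')⟫_ℂ
          = ⟪g, g'⟫_ℂ) ∧
     (∀ i j, i ≠ j → ∀ (gi : Hs i) (gj : Hs j),
        ⟪v i • gfProj W i (adjoint (Λ i) gi), v j • gfProj W j (adjoint (Λ j) gj)⟫_ℂ = 0) ∧
     (∀ f : H, HasSum (fun j => (v j) ^ 2 * ‖Λ j (gfProj W j f)‖ ^ 2) (‖f‖ ^ 2)))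
      ↔
    (Orthonormal ℂ (fun p : Σ j, K j => u p.1 p.2) ∧
     (Submodule.span ℂ (Set.range fun p : Σ j, K j => u p.1 p.2)).topologicalClosure = ⊤) := by
  classical
  set T : ∀ j, Hs j →L[ℂ] H :=
    fun j => ((v j : ℂ)) • ((gfProj W j).comp (adjoint (Λ j))) with hT
  have hTapp : ∀ j (g : Hs j), T j g = v j • gfProj W j (adjoint (Λ j) g) := by
    intro j g
    rw [gf_real_smul_eq]
    rfl
  have hue : ∀ j k, u j k = T j (e j k) := by
    intro j k; rw [hu, hTapp]
  have hinner_u : ∀ j k (f : H),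
      ⟪u j k, f⟫_ℂ = (v j : ℂ) * ⟪e j k, Λ j (gfProj W j f)⟫_ℂ := by
    intro j k f
    rw [hu, gf_real_smul_eq, inner_smul_left, Complex.conj_ofReal,
      gfProj_inner_swap W j, adjoint_inner_left]
  have hexp : ∀ j (g : Hs j),
      HasSum (fun k => (e j).repr g k • u j k) (T j g) := by
    intro j g
    have h := ((e j).hasSum_repr g).mapL (T j)
    simpa only [map_smul, ← hue] using h
  constructor
  · rintro ⟨h1, h2, h3⟩
    have hon : Orthonormal ℂ (fun p : Σ j, K j => u p.1 p.2) := by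
      rw [orthonormal_iff_ite]
      rintro ⟨j, k⟩ ⟨j', k'⟩
      by_cases hj : j = j'
      · subst hj
        have hek := orthonormal_iff_ite.mp (e j).orthonormal k k'
        simp only [hu, h1 j (e j k) (e j k'), hek]
        by_cases hk : k = k' <;> simp [hk]
      · simp only [hu, h2 j j' hj (e j k) (e j' k')]
        rw [if_neg]
        intro hcon
        exact hj (congrArg Sigma.fst hcon)
    refine ⟨hon, ?_⟩
    rw [Submodule.topologicalClosure_eq_top_iff, Submodule.eq_bot_iff]
    intro f hf
    have hz : ∀ j k, ⟪u j k, f⟫_ℂ = 0 := by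
      intro j k
      exact (Submodule.mem_orthogonal _ f).mp hf _
        (Submodule.subset_span ⟨⟨j, k⟩, rfl⟩)
    have hΛ0 : ∀ j, Λ j (gfProj W j f) = 0 := by
      intro j
      have hz2 : ∀ k, ⟪e j k, Λ j (gfProj W j f)⟫_ℂ = 0 := by
        intro k
        have := hz j k
        rw [hinner_u] at this
        have hvne : (v j : ℂ) ≠ 0 := by
          exact_mod_cast (hv j).ne'
        exact (mul_eq_zero.mp this).resolve_left hvne
      have h := (e j).hasSum_repr (Λ j (gfProj W j f))
      simp only [HilbertBasis.repr_apply_apply, hz2, zero_smul] at h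
      exact (hasSum_zero.unique h).symm
    have h3f := h3 f
    simp only [hΛ0, norm_zero] at h3f
    have hf2 : (0 : ℝ) = ‖f‖ ^ 2 := hasSum_zero.unique (by simpa using h3f)
    have hf0 : ‖f‖ = 0 := by nlinarith [norm_nonneg f]
    exact norm_eq_zero.mp hf0
  · rintro ⟨hon, hsp⟩
    have hip := orthonormal_iff_ite.mp hon
    have ha : ∀ j (g : Hs j) k, ⟪u j k, T j g⟫_ℂ = (e j).repr g k := by
      intro j g k
      have h := (hexp j g).mapL (innerSL ℂ (u j k))
      have hterm : ∀ k', innerSL ℂ (u j k) ((e j).repr g k' • u j k')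
          = if k' = k then (e j).repr g k else 0 := by
        intro k'
        simp only [innerSL_apply_apply, inner_smul_right]
        have hkk := hip ⟨j, k⟩ ⟨j, k'⟩
        by_cases hk : k' = k
        · subst hk; have hn : ‖u j k'‖ = 1 := hon.1 ⟨j, k'⟩; simp [hn]
        · have hne : (⟨j, k⟩ : Σ j, K j) ≠ ⟨j, k'⟩ := by
            intro hcon
            exact hk (heq_iff_eq.mp (Sigma.mk.inj_iff.mp hcon).2).symm
          rw [if_neg hne] at hkk
          simp [hkk, hk]
      rw [show (fun k' => innerSL ℂ (u j k) ((e j).repr g k' • u j k'))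
          = fun k' => if k' = k then (e j).repr g k else 0 from funext hterm] at h
      exact ((hasSum_ite_eq k _).unique h).symm
    have hb : ∀ i j, j ≠ i → ∀ (g : Hs i) k, ⟪u j k, T i g⟫_ℂ = 0 := by
      intro i j hji g k
      have h := (hexp i g).mapL (innerSL ℂ (u j k))
      have hterm : ∀ k', innerSL ℂ (u j k) ((e i).repr g k' • u i k') = 0 := by
        intro k'
        have hne : (⟨j, k⟩ : Σ j, K j) ≠ ⟨i, k'⟩ := by
          intro hcon; exact hji (congrArg Sigma.fst hcon)
        have hkk := hip ⟨j, k⟩ ⟨i, k'⟩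
        rw [if_neg hne] at hkk
        simp [inner_smul_right, hkk]
      rw [show (fun k' => innerSL ℂ (u j k) ((e i).repr g k' • u i k'))
          = fun _ => (0 : ℂ) from funext hterm] at h
      exact (hasSum_zero.unique h).symm
    refine ⟨fun j g g' => ?_, fun i j hij gi gj => ?_, fun f => ?_⟩
    · rw [← hTapp, ← hTapp]
      have h := (hexp j g').mapL (innerSL ℂ (T j g))
      have hterm : ∀ k, innerSL ℂ (T j g) ((e j).repr g' k • u j k)
          = ⟪g, e j k⟫_ℂ * ⟪e j k, g'⟫_ℂ := by
        intro k
        simp only [innerSL_apply_apply, inner_smul_right]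
        have hTu : ⟪T j g, u j k⟫_ℂ = ⟪g, e j k⟫_ℂ := by
          rw [← inner_conj_symm, ha j g k, HilbertBasis.repr_apply_apply,
            inner_conj_symm]
        rw [hTu, HilbertBasis.repr_apply_apply, mul_comm]
      rw [show (fun k => innerSL ℂ (T j g) ((e j).repr g' k • u j k))
          = fun k => ⟪g, e j k⟫_ℂ * ⟪e j k, g'⟫_ℂ from funext hterm] at h
      exact (((e j).hasSum_inner_mul_inner g g').unique h).symm
    · rw [← hTapp, ← hTapp]
      have h := (hexp j gj).mapL (innerSL ℂ (T i gi))
      have hterm : ∀ k, innerSL ℂ (T i gi) ((e j).repr gj k • u j k) = 0 := by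
        intro k
        have hTu : ⟪T i gi, u j k⟫_ℂ = 0 := by
          rw [← inner_conj_symm, hb i j (Ne.symm hij) gi k]
          simp
        simp [inner_smul_right, hTu]
      rw [show (fun k => innerSL ℂ (T i gi) ((e j).repr gj k • u j k))
          = fun _ => (0 : ℂ) from funext hterm] at h
      exact (hasSum_zero.unique h).symm
    · have hle : ⊤ ≤ (Submodule.span ℂ
          (Set.range fun p : Σ j, K j => u p.1 p.2)).topologicalClosure := hsp.ge
      let b : HilbertBasis (Σ j, K j) ℂ H := HilbertBasis.mk hon hle
      have hbcoe : ∀ p : Σ j, K j, b p = u p.1 p.2 := by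
        intro p
        rw [show ⇑b = fun p : Σ j, K j => u p.1 p.2 from HilbertBasis.coe_mk hon hle]
      have hbsum := gf_hasSum_norm_sq_inner b f
      simp only [hbcoe] at hbsum
      refine HasSum.sigma hbsum ?_
      intro j
      have hpars := gf_hasSum_norm_sq_inner (e j) (Λ j (gfProj W j f))
      have h := hpars.mul_left ((v j) ^ 2)
      have hterm : ∀ k, (v j) ^ 2 * ‖⟪e j k, Λ j (gfProj W j f)⟫_ℂ‖ ^ 2
          = ‖⟪u j k, f⟫_ℂ‖ ^ 2 := by
        intro k
        rw [hinner_u, norm_mul, mul_pow, Complex.norm_real,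
          Real.norm_eq_abs, sq_abs]
      simpa only [hterm] using h
end

section
/- Let Λ = (W_j, Λ_j, v_j) be a g-fusion frame for H with bounds A, B, let Θ_j : H → H_j be bounded linear operators, and let λ, μ, γ ≥ 0 satisfy max{λ + γ/√A, μ} < 1. Suppose that for every finite subset I ⊆ J and every f ∈ H: ‖Σ_{j∈I} v_j² (π_{W_j}Λ_j*Λ_jπ_{W_j} f − π_{W_j}Θ_j*Θ_jπ_{W_j} f)‖ ≤ λ‖Σ_{j∈I} v_j² π_{W_j}Λ_j*Λ_jπ_{W_j} f‖ + μ‖Σ_{j∈I} v_j² π_{W_j}Θ_j*Θ_jπ_{W_j} f‖ + γ(Σ_{j∈I} v_j² ‖Λ_jπ_{W_j} f‖²)^{1/2}. Then Θ = (W_j, Θ_j, v_j) is a g-fusion frame for H with bounds A·(1 − (λ + γ/√A))/(1 + μ) and B·(1 + λ + γ/√B)/(1 − μ). -/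
open scoped InnerProductSpace
open ContinuousLinearMap

private lemma tsum_cs {ι : Type*} {a b : ι → ℝ} (ha : ∀ i, 0 ≤ a i) (hb : ∀ i, 0 ≤ b i)
    (ha2 : Summable (fun i => a i ^ 2)) (hb2 : Summable (fun i => b i ^ 2)) :
    Summable (fun i => a i * b i) ∧
    ∑' i, a i * b i ≤ Real.sqrt (∑' i, a i ^ 2) * Real.sqrt (∑' i, b i ^ 2) := by
  have hsum : Summable (fun i => a i * b i) := by
    refine Summable.of_nonneg_of_le (fun i => mul_nonneg (ha i) (hb i))
      (fun i => ?_) ((ha2.add hb2).div_const 2)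
    nlinarith [sq_nonneg (a i - b i)]
  refine ⟨hsum, Summable.tsum_le_of_sum_le hsum (fun s => ?_)⟩
  calc ∑ i ∈ s, a i * b i ≤ Real.sqrt (∑ i ∈ s, a i ^ 2) * Real.sqrt (∑ i ∈ s, b i ^ 2) :=
        Real.sum_mul_le_sqrt_mul_sqrt s a b
    _ ≤ Real.sqrt (∑' i, a i ^ 2) * Real.sqrt (∑' i, b i ^ 2) := by
        gcongr <;> [exact Summable.sum_le_tsum s (fun i _ => sq_nonneg _) ha2;
          exact Summable.sum_le_tsum s (fun i _ => sq_nonneg _) hb2]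

private lemma gf_inner_term {H : Type*} [NormedAddCommGroup H] [InnerProductSpace ℂ H]
    [CompleteSpace H]
    {Hs : Type*} [NormedAddCommGroup Hs] [InnerProductSpace ℂ Hs] [CompleteSpace Hs]
    (W : Submodule ℂ H) [CompleteSpace W] (M : H →L[ℂ] Hs) (f x : H) :
    ⟪(W.subtypeL.comp (W.orthogonalProjectionOnto))
        (adjoint M (M ((W.subtypeL.comp (W.orthogonalProjectionOnto)) f))), x⟫_ℂ =
      ⟪M ((W.subtypeL.comp (W.orthogonalProjectionOnto)) f),
       M ((W.subtypeL.comp (W.orthogonalProjectionOnto)) x)⟫_ℂ := by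
  have h1 : ∀ y z : H, ⟪(W.subtypeL.comp (W.orthogonalProjectionOnto)) y, z⟫_ℂ =
      ⟪y, (W.subtypeL.comp (W.orthogonalProjectionOnto)) z⟫_ℂ := fun y z =>
    Submodule.inner_starProjection_left_eq_right W y z
  rw [h1, adjoint_inner_left]

section Setup

variable {H : Type*} [NormedAddCommGroup H] [InnerProductSpace ℂ H] [CompleteSpace H]
    {J : Type*}
    {Hs : J → Type*} [∀ j, NormedAddCommGroup (Hs j)] [∀ j, InnerProductSpace ℂ (Hs j)]
    [∀ j, CompleteSpace (Hs j)]
    (W : J → Submodule ℂ H) [∀ j, CompleteSpace (W j)]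
    (v : J → ℝ) (M : ∀ j, H →L[ℂ] Hs j)

private lemma gf_inner_sum (I : Finset J) (f x : H) :
    ⟪∑ j ∈ I, ((v j) ^ 2 : ℝ) • gfProj W j (adjoint (M j) (M j (gfProj W j f))), x⟫_ℂ =
      ∑ j ∈ I, ((v j : ℂ) ^ 2) * ⟪M j (gfProj W j f), M j (gfProj W j x)⟫_ℂ := by
  rw [sum_inner]
  refine Finset.sum_congr rfl (fun j _ => ?_)
  rw [RCLike.real_smul_eq_coe_smul (K := ℂ), inner_smul_left]
  rw [show ((gfProj W j) ((adjoint (M j)) ((M j) ((gfProj W j) f)))) =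
    ((W j).subtypeL.comp ((W j).orthogonalProjectionOnto))
      (adjoint (M j) (M j (((W j).subtypeL.comp ((W j).orthogonalProjectionOnto)) f))) from rfl,
    gf_inner_term (W j) (M j) f x]
  push_cast
  simp [map_pow, Complex.conj_ofReal, gfProj]

private lemma gf_re_inner_sum_self (I : Finset J) (f : H) :
    (⟪∑ j ∈ I, ((v j) ^ 2 : ℝ) • gfProj W j (adjoint (M j) (M j (gfProj W j f))), f⟫_ℂ).re =
      ∑ j ∈ I, (v j) ^ 2 * ‖M j (gfProj W j f)‖ ^ 2 := by
  rw [gf_inner_sum, Complex.re_sum]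
  refine Finset.sum_congr rfl (fun j _ => ?_)
  rw [inner_self_eq_norm_sq_to_K]
  simp [← Complex.ofReal_pow, ← Complex.ofReal_mul]

private lemma gf_sum_norm_le (I : Finset J) (f : H) {D : ℝ} (hD : 0 ≤ D)
    (hbound : ∀ x : H, ∑ j ∈ I, (v j) ^ 2 * ‖M j (gfProj W j x)‖ ^ 2 ≤ D * ‖x‖ ^ 2) :
    ‖∑ j ∈ I, ((v j) ^ 2 : ℝ) • gfProj W j (adjoint (M j) (M j (gfProj W j f)))‖ ≤
      Real.sqrt D * Real.sqrt (∑ j ∈ I, (v j) ^ 2 * ‖M j (gfProj W j f)‖ ^ 2) := by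
  set s := ∑ j ∈ I, ((v j) ^ 2 : ℝ) • gfProj W j (adjoint (M j) (M j (gfProj W j f))) with hs
  by_cases h0 : s = 0
  · rw [h0, norm_zero]; positivity
  have hns : 0 < ‖s‖ := norm_pos_iff.mpr h0
  have hsq : ‖s‖ ^ 2 = (⟪s, s⟫_ℂ).re := by
    rw [← RCLike.re_to_complex, @inner_self_eq_norm_sq ℂ]
  have h2 : (⟪s, s⟫_ℂ).re ≤
      ∑ j ∈ I, (v j * ‖M j (gfProj W j f)‖) * (v j * ‖M j (gfProj W j s)‖) := by
    rw [hs, gf_inner_sum W v M I f s, Complex.re_sum]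
    refine Finset.sum_le_sum (fun j _ => ?_)
    have : ((v j : ℂ) ^ 2 * ⟪M j (gfProj W j f), M j (gfProj W j s)⟫_ℂ).re ≤
        ‖(v j : ℂ) ^ 2 * ⟪M j (gfProj W j f), M j (gfProj W j s)⟫_ℂ‖ :=
      Complex.re_le_norm _
    refine this.trans ?_
    rw [norm_mul]
    have hv2 : ‖(v j : ℂ) ^ 2‖ = v j ^ 2 := by
      rw [norm_pow, Complex.norm_real, Real.norm_eq_abs, sq_abs]
    rw [hv2]
    calc v j ^ 2 * ‖⟪M j (gfProj W j f), M j (gfProj W j s)⟫_ℂ‖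
        ≤ v j ^ 2 * (‖M j (gfProj W j f)‖ * ‖M j (gfProj W j s)‖) := by
          gcongr
          exact norm_inner_le_norm _ _
      _ = (v j * ‖M j (gfProj W j f)‖) * (v j * ‖M j (gfProj W j s)‖) := by ring
  have h3 : ∑ j ∈ I, (v j * ‖M j (gfProj W j f)‖) * (v j * ‖M j (gfProj W j s)‖) ≤
      Real.sqrt (∑ j ∈ I, (v j) ^ 2 * ‖M j (gfProj W j f)‖ ^ 2) *
      Real.sqrt (∑ j ∈ I, (v j) ^ 2 * ‖M j (gfProj W j s)‖ ^ 2) := by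
    have := Real.sum_mul_le_sqrt_mul_sqrt I (fun j => v j * ‖M j (gfProj W j f)‖)
      (fun j => v j * ‖M j (gfProj W j s)‖)
    simpa [mul_pow] using this
  have h4 : Real.sqrt (∑ j ∈ I, (v j) ^ 2 * ‖M j (gfProj W j s)‖ ^ 2) ≤
      Real.sqrt D * ‖s‖ := by
    rw [show Real.sqrt D * ‖s‖ = Real.sqrt (D * ‖s‖ ^ 2) by
      rw [Real.sqrt_mul hD, Real.sqrt_sq (norm_nonneg s)]]
    exact Real.sqrt_le_sqrt (hbound s)
  have h5 : ‖s‖ ^ 2 ≤ Real.sqrt (∑ j ∈ I, (v j) ^ 2 * ‖M j (gfProj W j f)‖ ^ 2) *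
      (Real.sqrt D * ‖s‖) := by
    calc ‖s‖ ^ 2 = (⟪s, s⟫_ℂ).re := hsq
      _ ≤ _ := h2
      _ ≤ _ := h3
      _ ≤ _ := by gcongr
  nlinarith [Real.sqrt_nonneg (∑ j ∈ I, (v j) ^ 2 * ‖M j (gfProj W j f)‖ ^ 2),
    Real.sqrt_nonneg D]

private lemma gf_inner_abs_le (I : Finset J) (f x : H) :
    ‖⟪∑ j ∈ I, ((v j) ^ 2 : ℝ) • gfProj W j (adjoint (M j) (M j (gfProj W j f))), x⟫_ℂ‖ ≤
      Real.sqrt (∑ j ∈ I, (v j) ^ 2 * ‖M j (gfProj W j f)‖ ^ 2) *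
      Real.sqrt (∑ j ∈ I, (v j) ^ 2 * ‖M j (gfProj W j x)‖ ^ 2) := by
  rw [gf_inner_sum]
  calc ‖∑ j ∈ I, ((v j : ℂ) ^ 2) * ⟪M j (gfProj W j f), M j (gfProj W j x)⟫_ℂ‖
      ≤ ∑ j ∈ I, ‖((v j : ℂ) ^ 2) * ⟪M j (gfProj W j f), M j (gfProj W j x)⟫_ℂ‖ :=
        norm_sum_le _ _
    _ ≤ ∑ j ∈ I, (v j * ‖M j (gfProj W j f)‖) * (v j * ‖M j (gfProj W j x)‖) := by
        refine Finset.sum_le_sum (fun j _ => ?_)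
        rw [norm_mul]
        have hv2 : ‖(v j : ℂ) ^ 2‖ = v j ^ 2 := by
          rw [norm_pow, Complex.norm_real, Real.norm_eq_abs, sq_abs]
        rw [hv2]
        calc v j ^ 2 * ‖⟪M j (gfProj W j f), M j (gfProj W j x)⟫_ℂ‖
            ≤ v j ^ 2 * (‖M j (gfProj W j f)‖ * ‖M j (gfProj W j x)‖) := by
              gcongr
              exact norm_inner_le_norm _ _
          _ = _ := by ring
    _ ≤ _ := by
        have := Real.sum_mul_le_sqrt_mul_sqrt I (fun j => v j * ‖M j (gfProj W j f)‖)
          (fun j => v j * ‖M j (gfProj W j x)‖)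
        simpa [mul_pow] using this

private lemma gf_summable_vec {D : ℝ} (hD : 0 ≤ D)
    (hfin : ∀ (I : Finset J) (x : H),
      ∑ j ∈ I, (v j) ^ 2 * ‖M j (gfProj W j x)‖ ^ 2 ≤ D * ‖x‖ ^ 2)
    (f : H) (hsum : Summable (fun j => (v j) ^ 2 * ‖M j (gfProj W j f)‖ ^ 2)) :
    Summable (fun j => ((v j) ^ 2 : ℝ) • gfProj W j (adjoint (M j) (M j (gfProj W j f)))) := by
  rw [summable_iff_vanishing_norm]
  intro ε hε
  have hδ : (0:ℝ) < (ε / (Real.sqrt D + 1)) ^ 2 := by positivity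
  obtain ⟨s, hs⟩ := summable_iff_vanishing_norm.mp hsum _ hδ
  refine ⟨s, fun t ht => ?_⟩
  have h1 := hs t ht
  have hnn : (0:ℝ) ≤ ∑ j ∈ t, (v j) ^ 2 * ‖M j (gfProj W j f)‖ ^ 2 :=
    Finset.sum_nonneg (fun j _ => by positivity)
  rw [Real.norm_eq_abs, abs_of_nonneg hnn] at h1
  have h3 := gf_sum_norm_le W v M t f hD (fun x => hfin t x)
  have h4 : Real.sqrt (∑ j ∈ t, (v j) ^ 2 * ‖M j (gfProj W j f)‖ ^ 2) ≤
      ε / (Real.sqrt D + 1) := by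
    have h5 := Real.sqrt_le_sqrt h1.le
    rwa [Real.sqrt_sq (by positivity)] at h5
  have h6 : Real.sqrt D * (ε / (Real.sqrt D + 1)) < ε := by
    have h7 : Real.sqrt D / (Real.sqrt D + 1) < 1 := by
      rw [div_lt_one (by positivity)]
      linarith
    calc Real.sqrt D * (ε / (Real.sqrt D + 1)) = ε * (Real.sqrt D / (Real.sqrt D + 1)) := by
          ring
      _ < ε * 1 := by exact mul_lt_mul_of_pos_left h7 hε
      _ = ε := mul_one ε
  calc ‖∑ j ∈ t, ((v j) ^ 2 : ℝ) • gfProj W j (adjoint (M j) (M j (gfProj W j f)))‖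
      ≤ Real.sqrt D * Real.sqrt (∑ j ∈ t, (v j) ^ 2 * ‖M j (gfProj W j f)‖ ^ 2) := h3
    _ ≤ Real.sqrt D * (ε / (Real.sqrt D + 1)) := by gcongr
    _ < ε := h6

end Setup

private noncomputable def gfS {H : Type*} [NormedAddCommGroup H] [InnerProductSpace ℂ H]
    [CompleteSpace H] {J : Type*}
    {Hs : J → Type*} [∀ j, NormedAddCommGroup (Hs j)] [∀ j, InnerProductSpace ℂ (Hs j)]
    [∀ j, CompleteSpace (Hs j)]
    (W : J → Submodule ℂ H) [∀ j, CompleteSpace (W j)]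
    (v : J → ℝ) (M : ∀ j, H →L[ℂ] Hs j) (f : H) : H :=
  ∑' j, ((v j) ^ 2 : ℝ) • gfProj W j (adjoint (M j) (M j (gfProj W j f)))

private lemma gf_re_inner_tsum {H : Type*} [NormedAddCommGroup H] [InnerProductSpace ℂ H]
    [CompleteSpace H] {J : Type*}
    {Hs : J → Type*} [∀ j, NormedAddCommGroup (Hs j)] [∀ j, InnerProductSpace ℂ (Hs j)]
    [∀ j, CompleteSpace (Hs j)]
    (W : J → Submodule ℂ H) [∀ j, CompleteSpace (W j)]
    (v : J → ℝ) (M : ∀ j, H →L[ℂ] Hs j) (f : H)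
    (h1 : Summable (fun j => ((v j) ^ 2 : ℝ) • gfProj W j (adjoint (M j) (M j (gfProj W j f)))))
    (h2 : Summable (fun j => (v j) ^ 2 * ‖M j (gfProj W j f)‖ ^ 2)) :
    (⟪gfS W v M f, f⟫_ℂ).re = ∑' j, (v j) ^ 2 * ‖M j (gfProj W j f)‖ ^ 2 := by
  have t1 : Filter.Tendsto
      (fun I : Finset J => (⟪∑ j ∈ I, ((v j) ^ 2 : ℝ) •
        gfProj W j (adjoint (M j) (M j (gfProj W j f))), f⟫_ℂ).re)
      Filter.atTop (nhds ((⟪gfS W v M f, f⟫_ℂ).re)) :=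
    (Complex.continuous_re.tendsto _).comp (Filter.Tendsto.inner h1.hasSum tendsto_const_nhds)
  have t2 : Filter.Tendsto
      (fun I : Finset J => ∑ j ∈ I, (v j) ^ 2 * ‖M j (gfProj W j f)‖ ^ 2)
      Filter.atTop (nhds (∑' j, (v j) ^ 2 * ‖M j (gfProj W j f)‖ ^ 2)) := h2.hasSum
  have heq : (fun I : Finset J => (⟪∑ j ∈ I, ((v j) ^ 2 : ℝ) •
        gfProj W j (adjoint (M j) (M j (gfProj W j f))), f⟫_ℂ).re) =
      (fun I : Finset J => ∑ j ∈ I, (v j) ^ 2 * ‖M j (gfProj W j f)‖ ^ 2) :=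
    funext (fun I => gf_re_inner_sum_self W v M I f)
  rw [heq] at t1
  exact tendsto_nhds_unique t1 t2

private lemma gf_cs_tsum {H : Type*} [NormedAddCommGroup H] [InnerProductSpace ℂ H]
    [CompleteSpace H] {J : Type*}
    {Hs : J → Type*} [∀ j, NormedAddCommGroup (Hs j)] [∀ j, InnerProductSpace ℂ (Hs j)]
    [∀ j, CompleteSpace (Hs j)]
    (W : J → Submodule ℂ H) [∀ j, CompleteSpace (W j)]
    (v : J → ℝ) (M : ∀ j, H →L[ℂ] Hs j) (f x : H)
    (h1 : Summable (fun j => ((v j) ^ 2 : ℝ) • gfProj W j (adjoint (M j) (M j (gfProj W j f)))))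
    (h2 : Summable (fun j => (v j) ^ 2 * ‖M j (gfProj W j f)‖ ^ 2))
    (h3 : Summable (fun j => (v j) ^ 2 * ‖M j (gfProj W j x)‖ ^ 2)) :
    ‖⟪gfS W v M f, x⟫_ℂ‖ ≤
      Real.sqrt (∑' j, (v j) ^ 2 * ‖M j (gfProj W j f)‖ ^ 2) *
      Real.sqrt (∑' j, (v j) ^ 2 * ‖M j (gfProj W j x)‖ ^ 2) := by
  have t1 : Filter.Tendsto
      (fun I : Finset J => ‖⟪∑ j ∈ I, ((v j) ^ 2 : ℝ) •
        gfProj W j (adjoint (M j) (M j (gfProj W j f))), x⟫_ℂ‖)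
      Filter.atTop (nhds ‖⟪gfS W v M f, x⟫_ℂ‖) :=
    (continuous_norm.tendsto _).comp (Filter.Tendsto.inner h1.hasSum tendsto_const_nhds)
  refine le_of_tendsto t1 (Filter.Eventually.of_forall (fun I => ?_))
  refine (gf_inner_abs_le W v M I f x).trans ?_
  gcongr
  · exact Summable.sum_le_tsum I (fun j _ => by positivity) h2
  · exact Summable.sum_le_tsum I (fun j _ => by positivity) h3

set_option maxHeartbeats 2000000 in
/-- perturbation: if `Λ` is a g-fusion frame with bounds `A, B` and `Θ_j`
satisfy the stated finite-sum perturbation inequality with `max{λ + γ/√A, μ} < 1`, then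
`Θ = (W_j, Θ_j, v_j)` is a g-fusion frame with bounds
`A(1 − (λ + γ/√A))/(1 + μ)` and `B(1 + λ + γ/√B)/(1 − μ)`. -/
theorem gfusion_frame_perturbation
    {H : Type*} [NormedAddCommGroup H] [InnerProductSpace ℂ H] [CompleteSpace H]
    {J : Type*} [Countable J]
    {Hs : J → Type*} [∀ j, NormedAddCommGroup (Hs j)] [∀ j, InnerProductSpace ℂ (Hs j)]
    [∀ j, CompleteSpace (Hs j)]
    (W : J → Submodule ℂ H) [∀ j, CompleteSpace (W j)]
    (v : J → ℝ) (hv : ∀ j, 0 < v j)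
    (Λ : ∀ j, H →L[ℂ] Hs j) (Θ : ∀ j, H →L[ℂ] Hs j)
    (A B : ℝ) (hA : 0 < A) (hAB : A ≤ B)
    (hframe : ∀ f : H,
        Summable (fun j => (v j) ^ 2 * ‖Λ j (gfProj W j f)‖ ^ 2) ∧
        A * ‖f‖ ^ 2 ≤ ∑' j, (v j) ^ 2 * ‖Λ j (gfProj W j f)‖ ^ 2 ∧
        ∑' j, (v j) ^ 2 * ‖Λ j (gfProj W j f)‖ ^ 2 ≤ B * ‖f‖ ^ 2)
    (lam mu gam : ℝ) (hlam : 0 ≤ lam) (hmu : 0 ≤ mu) (hgam : 0 ≤ gam)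
    (hmax : lam + gam / Real.sqrt A < 1 ∧ mu < 1)
    (hpert : ∀ (I : Finset J) (f : H),
        ‖∑ j ∈ I, ((v j) ^ 2 : ℝ) •
            (gfProj W j (adjoint (Λ j) (Λ j (gfProj W j f))) -
             gfProj W j (adjoint (Θ j) (Θ j (gfProj W j f))))‖ ≤
          lam * ‖∑ j ∈ I, ((v j) ^ 2 : ℝ) •
              gfProj W j (adjoint (Λ j) (Λ j (gfProj W j f)))‖ +
          mu * ‖∑ j ∈ I, ((v j) ^ 2 : ℝ) •
              gfProj W j (adjoint (Θ j) (Θ j (gfProj W j f)))‖ +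
          gam * Real.sqrt (∑ j ∈ I, (v j) ^ 2 * ‖Λ j (gfProj W j f)‖ ^ 2)) :
    ∀ f : H,
      Summable (fun j => (v j) ^ 2 * ‖Θ j (gfProj W j f)‖ ^ 2) ∧
      A * ((1 - (lam + gam / Real.sqrt A)) / (1 + mu)) * ‖f‖ ^ 2 ≤
        ∑' j, (v j) ^ 2 * ‖Θ j (gfProj W j f)‖ ^ 2 ∧
      ∑' j, (v j) ^ 2 * ‖Θ j (gfProj W j f)‖ ^ 2 ≤
        B * ((1 + lam + gam / Real.sqrt B) / (1 - mu)) * ‖f‖ ^ 2 := by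
  classical
  have hBpos : 0 < B := lt_of_lt_of_le hA hAB
  have hsA : 0 < Real.sqrt A := Real.sqrt_pos.mpr hA
  have hsB : 0 < Real.sqrt B := Real.sqrt_pos.mpr hBpos
  have hmu1 : 0 < 1 - mu := by linarith [hmax.2]
  have hmu2 : 0 < 1 + mu := by linarith
  have hlg1 : 0 < 1 - (lam + gam / Real.sqrt A) := by linarith [hmax.1]
  have hgA : 0 ≤ gam / Real.sqrt A := div_nonneg hgam hsA.le
  set a0 : ℝ := A * ((1 - (lam + gam / Real.sqrt A)) / (1 + mu)) with ha0
  have ha0pos : 0 < a0 := by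
    apply mul_pos hA
    exact div_pos hlg1 hmu2
  -- finite Λ scalar bound
  have haL_fin : ∀ (I : Finset J) (x : H),
      ∑ j ∈ I, (v j) ^ 2 * ‖Λ j (gfProj W j x)‖ ^ 2 ≤ B * ‖x‖ ^ 2 := fun I x =>
    le_trans (Summable.sum_le_tsum I (fun j _ => by positivity) (hframe x).1) (hframe x).2.2
  have hSLn : ∀ (I : Finset J) (f : H),
      ‖∑ j ∈ I, ((v j) ^ 2 : ℝ) • gfProj W j (adjoint (Λ j) (Λ j (gfProj W j f)))‖ ≤
        Real.sqrt B * Real.sqrt (∑ j ∈ I, (v j) ^ 2 * ‖Λ j (gfProj W j f)‖ ^ 2) :=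
    fun I f => gf_sum_norm_le W v Λ I f hBpos.le (haL_fin I)
  -- rearranged perturbation hypothesis
  have hpert' : ∀ (I : Finset J) (f : H),
      ‖(∑ j ∈ I, ((v j) ^ 2 : ℝ) • gfProj W j (adjoint (Λ j) (Λ j (gfProj W j f)))) -
       (∑ j ∈ I, ((v j) ^ 2 : ℝ) • gfProj W j (adjoint (Θ j) (Θ j (gfProj W j f))))‖ ≤
        lam * ‖∑ j ∈ I, ((v j) ^ 2 : ℝ) • gfProj W j (adjoint (Λ j) (Λ j (gfProj W j f)))‖ +
        mu * ‖∑ j ∈ I, ((v j) ^ 2 : ℝ) • gfProj W j (adjoint (Θ j) (Θ j (gfProj W j f)))‖ +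
        gam * Real.sqrt (∑ j ∈ I, (v j) ^ 2 * ‖Λ j (gfProj W j f)‖ ^ 2) := by
    intro I f
    have h := hpert I f
    simpa [smul_sub, Finset.sum_sub_distrib] using h
  set K0 : ℝ := (1 + lam) * Real.sqrt B + gam with hK0
  have hK0n : 0 ≤ K0 := by positivity
  -- finite Θ operator-sum bound
  have hSTn : ∀ (I : Finset J) (f : H),
      (1 - mu) * ‖∑ j ∈ I, ((v j) ^ 2 : ℝ) • gfProj W j (adjoint (Θ j) (Θ j (gfProj W j f)))‖ ≤
        K0 * Real.sqrt (∑ j ∈ I, (v j) ^ 2 * ‖Λ j (gfProj W j f)‖ ^ 2) := by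
    intro I f
    have hp := hpert' I f
    set sL := ∑ j ∈ I, ((v j) ^ 2 : ℝ) • gfProj W j (adjoint (Λ j) (Λ j (gfProj W j f)))
    set sT := ∑ j ∈ I, ((v j) ^ 2 : ℝ) • gfProj W j (adjoint (Θ j) (Θ j (gfProj W j f)))
    have h1 : ‖sT‖ ≤ ‖sL‖ + ‖sL - sT‖ := by
      calc ‖sT‖ = ‖sL - (sL - sT)‖ := by rw [sub_sub_cancel]
        _ ≤ ‖sL‖ + ‖sL - sT‖ := norm_sub_le _ _
    have h2 := hSLn I f
    have h3 : (1 + lam) * ‖sL‖ ≤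
        (1 + lam) * (Real.sqrt B * Real.sqrt (∑ j ∈ I, (v j) ^ 2 * ‖Λ j (gfProj W j f)‖ ^ 2)) :=
      mul_le_mul_of_nonneg_left h2 (by linarith)
    rw [hK0, add_mul]
    nlinarith [Real.sqrt_nonneg (∑ j ∈ I, (v j) ^ 2 * ‖Λ j (gfProj W j f)‖ ^ 2)]
  set C : ℝ := K0 * Real.sqrt B / (1 - mu) with hC
  have hCn : 0 ≤ C := div_nonneg (mul_nonneg hK0n hsB.le) hmu1.le
  -- finite Θ scalar bound
  have haT_fin : ∀ (I : Finset J) (f : H),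
      ∑ j ∈ I, (v j) ^ 2 * ‖Θ j (gfProj W j f)‖ ^ 2 ≤ C * ‖f‖ ^ 2 := by
    intro I f
    set sT := ∑ j ∈ I, ((v j) ^ 2 : ℝ) • gfProj W j (adjoint (Θ j) (Θ j (gfProj W j f))) with hsT
    have he : (⟪sT, f⟫_ℂ).re = ∑ j ∈ I, (v j) ^ 2 * ‖Θ j (gfProj W j f)‖ ^ 2 :=
      gf_re_inner_sum_self W v Θ I f
    have h1 : (⟪sT, f⟫_ℂ).re ≤ ‖sT‖ * ‖f‖ := by
      calc (⟪sT, f⟫_ℂ).re ≤ ‖⟪sT, f⟫_ℂ‖ := Complex.re_le_norm _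
        _ = ‖⟪sT, f⟫_ℂ‖ := rfl
        _ ≤ ‖sT‖ * ‖f‖ := norm_inner_le_norm _ _
    have h2 := hSTn I f
    have h3 : Real.sqrt (∑ j ∈ I, (v j) ^ 2 * ‖Λ j (gfProj W j f)‖ ^ 2) ≤
        Real.sqrt B * ‖f‖ := by
      rw [show Real.sqrt B * ‖f‖ = Real.sqrt (B * ‖f‖ ^ 2) by
        rw [Real.sqrt_mul hBpos.le, Real.sqrt_sq (norm_nonneg f)]]
      exact Real.sqrt_le_sqrt (haL_fin I f)
    have h4 : (1 - mu) * ‖sT‖ ≤ K0 * (Real.sqrt B * ‖f‖) := by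
      refine h2.trans ?_
      exact mul_le_mul_of_nonneg_left h3 hK0n
    have h5 : ‖sT‖ ≤ C * ‖f‖ := by
      rw [hC, div_mul_eq_mul_div, le_div_iff₀ hmu1]
      nlinarith
    calc ∑ j ∈ I, (v j) ^ 2 * ‖Θ j (gfProj W j f)‖ ^ 2 = (⟪sT, f⟫_ℂ).re := he.symm
      _ ≤ ‖sT‖ * ‖f‖ := h1
      _ ≤ (C * ‖f‖) * ‖f‖ := mul_le_mul_of_nonneg_right h5 (norm_nonneg f)
      _ = C * ‖f‖ ^ 2 := by ring
  have hsum_aT : ∀ f : H, Summable (fun j => (v j) ^ 2 * ‖Θ j (gfProj W j f)‖ ^ 2) := fun f =>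
    summable_of_sum_le (fun j => by positivity) (fun I => haT_fin I f)
  have htsum_aT : ∀ f : H, ∑' j, (v j) ^ 2 * ‖Θ j (gfProj W j f)‖ ^ 2 ≤ C * ‖f‖ ^ 2 := fun f =>
    Summable.tsum_le_of_sum_le (hsum_aT f) (fun I => haT_fin I f)
  -- constant identification
  have hCB : C = B * ((1 + lam + gam / Real.sqrt B) / (1 - mu)) := by
    have hb : Real.sqrt B * Real.sqrt B = B := Real.mul_self_sqrt hBpos.le
    have hbne : Real.sqrt B ≠ 0 := ne_of_gt hsB
    rw [hC, hK0, ← mul_div_assoc]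
    congr 1
    field_simp
    nlinarith [hb]
  -- norm bound on finite Θ operator sums
  have hSTC : ∀ (I : Finset J) (f : H),
      ‖∑ j ∈ I, ((v j) ^ 2 : ℝ) • gfProj W j (adjoint (Θ j) (Θ j (gfProj W j f)))‖ ≤ C * ‖f‖ := by
    intro I f
    have h2 := hSTn I f
    have h3 : Real.sqrt (∑ j ∈ I, (v j) ^ 2 * ‖Λ j (gfProj W j f)‖ ^ 2) ≤
        Real.sqrt B * ‖f‖ := by
      rw [show Real.sqrt B * ‖f‖ = Real.sqrt (B * ‖f‖ ^ 2) by
        rw [Real.sqrt_mul hBpos.le, Real.sqrt_sq (norm_nonneg f)]]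
      exact Real.sqrt_le_sqrt (haL_fin I f)
    have h4 : (1 - mu) *
        ‖∑ j ∈ I, ((v j) ^ 2 : ℝ) • gfProj W j (adjoint (Θ j) (Θ j (gfProj W j f)))‖ ≤
        K0 * (Real.sqrt B * ‖f‖) := h2.trans (mul_le_mul_of_nonneg_left h3 hK0n)
    rw [hC, div_mul_eq_mul_div, le_div_iff₀ hmu1]
    nlinarith
  -- vector summability
  have hsum_vecL : ∀ f : H, Summable (fun j =>
      ((v j) ^ 2 : ℝ) • gfProj W j (adjoint (Λ j) (Λ j (gfProj W j f)))) := fun f =>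
    gf_summable_vec W v Λ hBpos.le haL_fin f (hframe f).1
  have hsum_vecT : ∀ f : H, Summable (fun j =>
      ((v j) ^ 2 : ℝ) • gfProj W j (adjoint (Θ j) (Θ j (gfProj W j f)))) := fun f =>
    gf_summable_vec W v Θ hCn haT_fin f (hsum_aT f)
  have htendL : ∀ f : H, Filter.Tendsto (fun I : Finset J =>
      ∑ j ∈ I, ((v j) ^ 2 : ℝ) • gfProj W j (adjoint (Λ j) (Λ j (gfProj W j f))))
      Filter.atTop (nhds (gfS W v Λ f)) := fun f => (hsum_vecL f).hasSum
  have htendT : ∀ f : H, Filter.Tendsto (fun I : Finset J =>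
      ∑ j ∈ I, ((v j) ^ 2 : ℝ) • gfProj W j (adjoint (Θ j) (Θ j (gfProj W j f))))
      Filter.atTop (nhds (gfS W v Θ f)) := fun f => (hsum_vecT f).hasSum
  -- limit perturbation inequality
  have hpert_lim : ∀ f : H, ‖gfS W v Λ f - gfS W v Θ f‖ ≤
      lam * ‖gfS W v Λ f‖ + mu * ‖gfS W v Θ f‖ +
      gam * Real.sqrt (∑' j, (v j) ^ 2 * ‖Λ j (gfProj W j f)‖ ^ 2) := by
    intro f
    refine le_of_tendsto_of_tendsto'
      (((htendL f).sub (htendT f)).norm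
      ) ((((htendL f).norm.const_mul lam).add ((htendT f).norm.const_mul mu)).add
        (((hframe f).1.hasSum.sqrt.const_mul gam))) (fun I => hpert' I f)
  -- limit norm bound for ST
  have hSTC_lim : ∀ f : H, ‖gfS W v Θ f‖ ≤ C * ‖f‖ := fun f =>
    le_of_tendsto (htendT f).norm (Filter.Eventually.of_forall (fun I => hSTC I f))
  -- re-inner identities
  have hreL : ∀ f : H, (⟪gfS W v Λ f, f⟫_ℂ).re =
      ∑' j, (v j) ^ 2 * ‖Λ j (gfProj W j f)‖ ^ 2 := fun f =>
    gf_re_inner_tsum W v Λ f (hsum_vecL f) (hframe f).1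
  have hreT : ∀ f : H, (⟪gfS W v Θ f, f⟫_ℂ).re =
      ∑' j, (v j) ^ 2 * ‖Θ j (gfProj W j f)‖ ^ 2 := fun f =>
    gf_re_inner_tsum W v Θ f (hsum_vecT f) (hsum_aT f)
  -- lower bound on ‖gfS W v Θ f‖
  have hlow : ∀ f : H, a0 * ‖f‖ ≤ ‖gfS W v Θ f‖ := by
    intro f
    by_cases hf : f = 0
    · simp [hf]
    have hfn : 0 < ‖f‖ := norm_pos_iff.mpr hf
    set tL := ∑' j, (v j) ^ 2 * ‖Λ j (gfProj W j f)‖ ^ 2 with htL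
    have htLpos : 0 < tL := lt_of_lt_of_le (by positivity) (hframe f).2.1
    have h1 : A * ‖f‖ ^ 2 ≤ tL := (hframe f).2.1
    have h2 : tL ≤ ‖gfS W v Λ f‖ * ‖f‖ := by
      rw [htL, ← hreL f]
      calc (⟪gfS W v Λ f, f⟫_ℂ).re ≤ ‖⟪gfS W v Λ f, f⟫_ℂ‖ := Complex.re_le_norm _
        _ = ‖⟪gfS W v Λ f, f⟫_ℂ‖ := rfl
        _ ≤ ‖gfS W v Λ f‖ * ‖f‖ := norm_inner_le_norm _ _
    have h3 : A * ‖f‖ ≤ ‖gfS W v Λ f‖ := by nlinarith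
    have h4 : Real.sqrt A * ‖f‖ ≤ Real.sqrt tL := by
      rw [show Real.sqrt A * ‖f‖ = Real.sqrt (A * ‖f‖ ^ 2) by
        rw [Real.sqrt_mul hA.le, Real.sqrt_sq (norm_nonneg f)]]
      exact Real.sqrt_le_sqrt h1
    have h5 : Real.sqrt A * Real.sqrt tL ≤ ‖gfS W v Λ f‖ := by
      have hstL : 0 < Real.sqrt tL := Real.sqrt_pos.mpr htLpos
      have hsq : Real.sqrt tL * Real.sqrt tL = tL := Real.mul_self_sqrt htLpos.le
      nlinarith [norm_nonneg (gfS W v Λ f)]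
    have h6 : gam * Real.sqrt tL ≤ (gam / Real.sqrt A) * ‖gfS W v Λ f‖ := by
      rw [div_mul_eq_mul_div, le_div_iff₀ hsA]
      nlinarith
    have h7 := hpert_lim f
    have h8 : ‖gfS W v Λ f‖ ≤ ‖gfS W v Θ f‖ + ‖gfS W v Λ f - gfS W v Θ f‖ := by
      calc ‖gfS W v Λ f‖ = ‖gfS W v Θ f + (gfS W v Λ f - gfS W v Θ f)‖ := by
            rw [add_sub_cancel]
        _ ≤ _ := norm_add_le _ _
    have h9 : (1 - (lam + gam / Real.sqrt A)) * ‖gfS W v Λ f‖ ≤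
        (1 + mu) * ‖gfS W v Θ f‖ := by nlinarith
    have h10 : (1 - (lam + gam / Real.sqrt A)) * (A * ‖f‖) ≤
        (1 + mu) * ‖gfS W v Θ f‖ := le_trans (mul_le_mul_of_nonneg_left h3 hlg1.le) h9
    rw [ha0, show A * ((1 - (lam + gam / Real.sqrt A)) / (1 + mu)) * ‖f‖ =
      ((1 - (lam + gam / Real.sqrt A)) * (A * ‖f‖)) / (1 + mu) by ring, div_le_iff₀ hmu2]
    nlinarith [norm_nonneg (gfS W v Θ f)]
  -- the Θ frame operator as a continuous linear map
  have hadd : ∀ x y : H, gfS W v Θ (x + y) = gfS W v Θ x + gfS W v Θ y := by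
    intro x y
    have he : ∀ j, ((v j) ^ 2 : ℝ) • gfProj W j (adjoint (Θ j) (Θ j (gfProj W j (x + y)))) =
        ((v j) ^ 2 : ℝ) • gfProj W j (adjoint (Θ j) (Θ j (gfProj W j x))) +
        ((v j) ^ 2 : ℝ) • gfProj W j (adjoint (Θ j) (Θ j (gfProj W j y))) := by
      intro j; simp [map_add, smul_add]
    calc gfS W v Θ (x + y) = ∑' j,
          (((v j) ^ 2 : ℝ) • gfProj W j (adjoint (Θ j) (Θ j (gfProj W j x))) +
           ((v j) ^ 2 : ℝ) • gfProj W j (adjoint (Θ j) (Θ j (gfProj W j y)))) := tsum_congr he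
      _ = _ := Summable.tsum_add (hsum_vecT x) (hsum_vecT y)
  have hsmul : ∀ (c : ℂ) (x : H), gfS W v Θ (c • x) = c • gfS W v Θ x := by
    intro c x
    have he : ∀ j, ((v j) ^ 2 : ℝ) • gfProj W j (adjoint (Θ j) (Θ j (gfProj W j (c • x)))) =
        c • (((v j) ^ 2 : ℝ) • gfProj W j (adjoint (Θ j) (Θ j (gfProj W j x)))) := by
      intro j; rw [map_smul, map_smul, map_smul, map_smul, smul_comm]
    calc gfS W v Θ (c • x) = ∑' j,
          c • (((v j) ^ 2 : ℝ) • gfProj W j (adjoint (Θ j) (Θ j (gfProj W j x)))) := tsum_congr he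
      _ = _ := Summable.tsum_const_smul c (hsum_vecT x)
  set T : H →L[ℂ] H := LinearMap.mkContinuous
    { toFun := gfS W v Θ, map_add' := hadd, map_smul' := hsmul } C
    (fun x => hSTC_lim x) with hTdef
  have hT : ∀ x, T x = gfS W v Θ x := fun x => rfl
  -- T is bounded below, hence has closed range
  have hb : ∀ x : H, ‖x‖ ≤ ((⟨a0⁻¹, inv_nonneg.mpr ha0pos.le⟩ : NNReal) : ℝ) * ‖T x‖ := by
    intro x
    have : (((⟨a0⁻¹, inv_nonneg.mpr ha0pos.le⟩ : NNReal)) : ℝ) = a0⁻¹ := rfl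
    rw [this, hT x]
    calc ‖x‖ = a0⁻¹ * (a0 * ‖x‖) := by field_simp
        _ ≤ a0⁻¹ * ‖gfS W v Θ x‖ := by
            exact mul_le_mul_of_nonneg_left (hlow x) (inv_nonneg.mpr ha0pos.le)
  have hanti := ContinuousLinearMap.antilipschitz_of_bound T hb
  have hclosed : IsClosed (Set.range T) := hanti.isClosed_range T.uniformContinuous
  have hclosed' : IsClosed ((LinearMap.range (T : H →ₗ[ℂ] H) : Submodule ℂ H) : Set H) := by
    rw [LinearMap.coe_range]
    exact hclosed
  haveI : CompleteSpace (LinearMap.range (T : H →ₗ[ℂ] H)) := hclosed'.completeSpace_coe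
  have horth : (LinearMap.range (T : H →ₗ[ℂ] H))ᗮ = ⊥ := by
    rw [Submodule.eq_bot_iff]
    intro x hx
    have hmem : T x ∈ LinearMap.range (T : H →ₗ[ℂ] H) := LinearMap.mem_range_self _ x
    have h0 : ⟪T x, x⟫_ℂ = 0 := (Submodule.mem_orthogonal _ x).mp hx (T x) hmem
    have h0' : ⟪gfS W v Θ x, x⟫_ℂ = 0 := h0
    have h1 : ∑' j, (v j) ^ 2 * ‖Θ j (gfProj W j x)‖ ^ 2 = 0 := by
      rw [← hreT x, h0', Complex.zero_re]
    have h2 : ∀ j, Θ j (gfProj W j x) = 0 := by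
      intro j
      by_contra hne
      have hn : 0 < ‖Θ j (gfProj W j x)‖ := norm_pos_iff.mpr hne
      have hvj := hv j
      have hpos : 0 < (v j) ^ 2 * ‖Θ j (gfProj W j x)‖ ^ 2 := by positivity
      have := Summable.tsum_pos (hsum_aT x) (fun i => by positivity) j hpos
      linarith
    have h3 : gfS W v Θ x = 0 := by
      have hz : ∀ j, ((v j) ^ 2 : ℝ) • gfProj W j (adjoint (Θ j) (Θ j (gfProj W j x))) =
          (0 : H) := by
        intro j; rw [h2 j]; simp
      calc gfS W v Θ x = ∑' (_ : J), (0 : H) := tsum_congr hz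
        _ = 0 := tsum_zero
    have h4 := hlow x
    rw [h3, norm_zero] at h4
    have h5 : ‖x‖ ≤ 0 := by nlinarith
    exact norm_le_zero_iff.mp h5
  have hsurj : Function.Surjective T :=
    LinearMap.range_eq_top.mp (Submodule.orthogonal_eq_bot_iff.mp horth)
  -- conclusion
  intro f
  refine ⟨hsum_aT f, ?_, ?_⟩
  · by_cases hf : f = 0
    · simp [hf, tsum_nonneg (fun j => by positivity :
        ∀ j, (0:ℝ) ≤ (v j) ^ 2 * ‖Θ j (gfProj W j (0:H))‖ ^ 2)]
    have hfn : 0 < ‖f‖ := norm_pos_iff.mpr hf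
    obtain ⟨g, hg⟩ := hsurj f
    have hg' : gfS W v Θ g = f := hg
    have htfn : (0:ℝ) ≤ ∑' j, (v j) ^ 2 * ‖Θ j (gfProj W j f)‖ ^ 2 :=
      tsum_nonneg (fun j => by positivity)
    have htgn : (0:ℝ) ≤ ∑' j, (v j) ^ 2 * ‖Θ j (gfProj W j g)‖ ^ 2 :=
      tsum_nonneg (fun j => by positivity)
    have q1 : ‖f‖ ^ 2 ≤ Real.sqrt (∑' j, (v j) ^ 2 * ‖Θ j (gfProj W j g)‖ ^ 2) *
        Real.sqrt (∑' j, (v j) ^ 2 * ‖Θ j (gfProj W j f)‖ ^ 2) := by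
      have e1 : (‖f‖:ℝ) ^ 2 = (⟪gfS W v Θ g, f⟫_ℂ).re := by
        rw [hg', ← RCLike.re_to_complex, @inner_self_eq_norm_sq ℂ]
      have e2 : (⟪gfS W v Θ g, f⟫_ℂ).re ≤ ‖⟪gfS W v Θ g, f⟫_ℂ‖ := by
        calc (⟪gfS W v Θ g, f⟫_ℂ).re ≤ ‖_‖ := Complex.re_le_norm _
          _ = ‖⟪gfS W v Θ g, f⟫_ℂ‖ := rfl
      have e3 := gf_cs_tsum W v Θ g f (hsum_vecT g) (hsum_aT g) (hsum_aT f)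
      linarith [e1, e2, e3]
    have q2 : (∑' j, (v j) ^ 2 * ‖Θ j (gfProj W j g)‖ ^ 2) * a0 ≤ ‖f‖ ^ 2 := by
      have e1 : ∑' j, (v j) ^ 2 * ‖Θ j (gfProj W j g)‖ ^ 2 ≤ ‖gfS W v Θ g‖ * ‖g‖ := by
        rw [← hreT g]
        calc (⟪gfS W v Θ g, g⟫_ℂ).re ≤ ‖_‖ := Complex.re_le_norm _
          _ = ‖⟪gfS W v Θ g, g⟫_ℂ‖ := rfl
          _ ≤ ‖gfS W v Θ g‖ * ‖g‖ := norm_inner_le_norm _ _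
      rw [hg'] at e1
      have e2 := hlow g
      rw [hg'] at e2
      nlinarith [htgn, norm_nonneg g, norm_nonneg f]
    have q3 : ‖f‖ ^ 4 ≤ (∑' j, (v j) ^ 2 * ‖Θ j (gfProj W j g)‖ ^ 2) *
        (∑' j, (v j) ^ 2 * ‖Θ j (gfProj W j f)‖ ^ 2) := by
      have e1 := Real.sq_sqrt htgn
      have e2 := Real.sq_sqrt htfn
      nlinarith [q1, Real.sqrt_nonneg (∑' j, (v j) ^ 2 * ‖Θ j (gfProj W j g)‖ ^ 2),
        Real.sqrt_nonneg (∑' j, (v j) ^ 2 * ‖Θ j (gfProj W j f)‖ ^ 2), sq_nonneg ‖f‖]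
    nlinarith [mul_le_mul_of_nonneg_right q2 htfn, mul_le_mul_of_nonneg_left q3 ha0pos.le,
      mul_pos hfn hfn, htfn]
  · rw [← hCB]
    exact htsum_aT f
end
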